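/- Let H be a complex Hilbert space and S : H → H a bounded linear operator. Then there exists ε > 0 such that every densely defined closed operator t on H whose graph projection satisfies ‖P_{G(t)} − P_{G(S)}‖ < ε has domain Dom(t) equal to all of H (and hence t is a bounded operator). -/

import Mathlib

/-- The graph of a densely defined (partial) operator `t` on `H`, viewed as a submodule of
the Hilbert space `H ⊕ H` (the `ℓ²`-direct sum `WithLp 2 (H × H)`). -/
noncomputable def pmapGraph {H : Type*} [NormedAddCommGroup H] [InnerProductSpace ℂ H]
    (t : H →ₗ.[ℂ] H) : Submodule ℂ (WithLp 2 (H × H)) :=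
  t.graph.comap (WithLp.linearEquiv 2 ℂ (H × H)).toLinearMap

/-- The graph of a bounded operator `T : H → H`, viewed as a submodule of the Hilbert
space `H ⊕ H`. -/
noncomputable def boundedGraph {H : Type*} [NormedAddCommGroup H] [InnerProductSpace ℂ H]
    (T : H →L[ℂ] H) : Submodule ℂ (WithLp 2 (H × H)) :=
  (LinearMap.graph (T : H →ₗ[ℂ] H)).comap (WithLp.linearEquiv 2 ℂ (H × H)).toLinearMap

/-- `P` is the orthogonal projection of the Hilbert space `E` onto the subspace `G`:
it is the (unique) selfadjoint idempotent bounded operator with range `G`. -/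
def IsOrthogonalProjectionOnto {E : Type*} [NormedAddCommGroup E] [InnerProductSpace ℂ E]
    [CompleteSpace E] (P : E →L[ℂ] E) (G : Submodule ℂ E) : Prop :=
  IsSelfAdjoint P ∧ IsIdempotentElem P ∧ LinearMap.range (P : E →ₗ[ℂ] E) = G

/-- Let `H` be a complex Hilbert space and `S : H → H` a bounded linear operator. Then
there exists `ε > 0` such that every densely defined closed operator `t` on `H` whose
graph projection satisfies `‖P_{G(t)} − P_{G(S)}‖ < ε` has domain all of `H`. -/
theorem stmt_7 {H : Type*} [NormedAddCommGroup H] [InnerProductSpace ℂ H] [CompleteSpace H]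
    (S : H →L[ℂ] H) :
    ∃ ε > (0 : ℝ), ∀ t : H →ₗ.[ℂ] H,
      Dense (t.domain : Set H) → IsClosed (t.graph : Set (H × H)) →
      ∀ Pt PS : WithLp 2 (H × H) →L[ℂ] WithLp 2 (H × H),
        IsOrthogonalProjectionOnto Pt (pmapGraph t) →
        IsOrthogonalProjectionOnto PS (boundedGraph S) →
        ‖Pt - PS‖ < ε → t.domain = ⊤ := by
  classical
  set c : ℝ := 1 + ‖S‖ with hc
  have hcpos : 0 < c := by positivity
  refine ⟨1 / (2 * c), by positivity, ?_⟩
  intro t _ _ Pt PS hPt hPS hnorm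
  set e := WithLp.prodContinuousLinearEquiv 2 ℂ H H with he
  set ι : H →L[ℂ] WithLp 2 (H × H) :=
    (e.symm : (H × H) →L[ℂ] WithLp 2 (H × H)).comp ((ContinuousLinearMap.id ℂ H).prod S) with hι
  set a : H →L[ℂ] H :=
    (ContinuousLinearMap.fst ℂ H H).comp
      (((e : WithLp 2 (H × H) →L[ℂ] H × H).comp Pt).comp ι) with ha
  -- ι x is fixed by PS
  have hfix : ∀ x : H, PS (ι x) = ι x := by
    intro x
    have hmem : ι x ∈ LinearMap.range (PS : WithLp 2 (H × H) →ₗ[ℂ] WithLp 2 (H × H)) := by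
      rw [hPS.2.2]
      simp only [boundedGraph, Submodule.mem_comap]
      simp only [hι, LinearMap.mem_graph_iff, ContinuousLinearMap.comp_apply,
        ContinuousLinearMap.prod_apply, ContinuousLinearMap.coe_id', id_eq,
        ContinuousLinearMap.coe_coe]
      rfl
    obtain ⟨y, hy⟩ := hmem
    rw [ContinuousLinearMap.coe_coe] at hy
    have := hPS.2.1
    rw [IsIdempotentElem] at this
    calc PS (ι x) = PS (PS y) := by rw [hy]
    _ = (PS * PS) y := rfl
    _ = PS y := by rw [this]
    _ = ι x := hy
  -- norm bound on ι
  have hιnorm : ∀ x : H, ‖ι x‖ ≤ c * ‖x‖ := by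
    intro x
    have h1 : ‖ι x‖ = Real.sqrt (‖x‖ ^ 2 + ‖S x‖ ^ 2) := by
      rw [WithLp.prod_norm_eq_of_L2]; congr 2
    rw [h1]
    have h2 : ‖x‖ ^ 2 + ‖S x‖ ^ 2 ≤ (‖x‖ + ‖S x‖) ^ 2 := by nlinarith [norm_nonneg x, norm_nonneg (S x)]
    calc Real.sqrt (‖x‖ ^ 2 + ‖S x‖ ^ 2) ≤ Real.sqrt ((‖x‖ + ‖S x‖) ^ 2) := Real.sqrt_le_sqrt h2
    _ = ‖x‖ + ‖S x‖ := Real.sqrt_sq (by positivity)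
    _ ≤ ‖x‖ + ‖S‖ * ‖x‖ := by linarith [S.le_opNorm x]
    _ = c * ‖x‖ := by ring
  -- a - 1 is small
  have hsmall : ‖1 - a‖ < 1 := by
    have hb : ∀ x : H, ‖(1 - a) x‖ ≤ (1 / 2) * ‖x‖ := by
      intro x
      have h1 : (1 - a) x = -(e ((Pt - PS) (ι x))).1 := by
        simp only [ContinuousLinearMap.sub_apply, ContinuousLinearMap.one_apply, ha,
          ContinuousLinearMap.comp_apply, ContinuousLinearMap.coe_coe, map_sub]
        rw [hfix x]
        have : (e (ι x)).1 = x := by simp [hι, he]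
        rw [Prod.fst_sub, this]
        abel
      rw [h1, norm_neg]
      have hfstle : ‖(e ((Pt - PS) (ι x))).1‖ ≤ ‖(Pt - PS) (ι x)‖ := by
        have : (e ((Pt - PS) (ι x))).1 = ((Pt - PS) (ι x)).fst := by
          rfl
        rw [this, WithLp.prod_norm_eq_of_L2]
        have h3 := Real.sqrt_le_sqrt (show ‖((Pt - PS) (ι x)).fst‖ ^ 2 ≤
          ‖((Pt - PS) (ι x)).fst‖ ^ 2 + ‖((Pt - PS) (ι x)).snd‖ ^ 2 from le_add_of_nonneg_right (by positivity))
        rwa [Real.sqrt_sq (norm_nonneg _)] at h3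
      calc ‖(e ((Pt - PS) (ι x))).1‖ ≤ ‖(Pt - PS) (ι x)‖ := hfstle
      _ ≤ ‖Pt - PS‖ * ‖ι x‖ := (Pt - PS).le_opNorm _
      _ ≤ (1 / (2 * c)) * (c * ‖x‖) := by
          apply mul_le_mul hnorm.le (hιnorm x) (norm_nonneg _) (by positivity)
      _ = (1 / 2) * ‖x‖ := by field_simp
    have := ContinuousLinearMap.opNorm_le_bound (1 - a) (by norm_num) hb
    linarith
  -- a is a unit
  set u : (H →L[ℂ] H)ˣ := Units.oneSub (1 - a) hsmall with hu
  have hua : (u : H →L[ℂ] H) = a := by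
    simp [hu, Units.oneSub]
  -- conclude
  rw [eq_top_iff]
  intro y _
  set x : H := (↑u⁻¹ : H →L[ℂ] H) y with hx
  have hax : a x = y := by
    have : (u : H →L[ℂ] H) ((↑u⁻¹ : H →L[ℂ] H) y) = y := by
      rw [← ContinuousLinearMap.comp_apply, ← ContinuousLinearMap.mul_def, u.mul_inv]
      rfl
    rw [hua] at this
    exact this
  have hmem : Pt (ι x) ∈ pmapGraph t := by
    rw [← hPt.2.2]; exact ⟨ι x, rfl⟩
  simp only [pmapGraph, Submodule.mem_comap] at hmem
  have hg : ((e (Pt (ι x))).1, (e (Pt (ι x))).2) ∈ t.graph := hmem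
  have := LinearPMap.mem_domain_of_mem_graph hg
  have hfst : (e (Pt (ι x))).1 = a x := by simp [ha]
  rwa [hfst, hax] at this
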